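/- Let n ≥ 1, s ∈ (0, 1/2), Ω ⊆ ℝ^n open, and let E, F ⊆ ℝ^n be measurable sets with Per_s(E, Ω) < ∞ and Per_s(F, Ω) < ∞. Then Per_s(E ∩ F, Ω) + Per_s(E ∪ F, Ω) ≤ Per_s(E, Ω) + Per_s(F, Ω). -/

import Mathlib

open MeasureTheory Set ENNReal

noncomputable def fracInter (n : ℕ) (s : ℝ)
    (F G : Set (EuclideanSpace ℝ (Fin n))) : ℝ≥0∞ :=
  ∫⁻ x in F, ∫⁻ y in G, ENNReal.ofReal (‖x - y‖ ^ (-((n : ℝ) + 2 * s)))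

noncomputable def fracPer (n : ℕ) (s : ℝ)
    (E Ω : Set (EuclideanSpace ℝ (Fin n))) : ℝ≥0∞ :=
  fracInter n s (E ∩ Ω) Eᶜ + fracInter n s (Ω \ E) (E \ Ω)

section Aux

variable {α : Type*}

/-- The key pointwise submodularity inequality for indicator functions. -/
lemma frac_key_pointwise (E F Ω : Set α) (f : α × α → ℝ≥0∞) (p : α × α) :
    ((((E ∩ F) ∩ Ω) ×ˢ (E ∩ F)ᶜ).indicator f p
        + ((Ω \ (E ∩ F)) ×ˢ ((E ∩ F) \ Ω)).indicator f p)
      + ((((E ∪ F) ∩ Ω) ×ˢ (E ∪ F)ᶜ).indicator f p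
        + ((Ω \ (E ∪ F)) ×ˢ ((E ∪ F) \ Ω)).indicator f p)
    ≤ (((E ∩ Ω) ×ˢ Eᶜ).indicator f p + ((Ω \ E) ×ˢ (E \ Ω)).indicator f p)
      + (((F ∩ Ω) ×ˢ Fᶜ).indicator f p + ((Ω \ F) ×ˢ (F \ Ω)).indicator f p) := by
  obtain ⟨x, y⟩ := p
  by_cases hxE : x ∈ E <;> by_cases hxF : x ∈ F <;> by_cases hxO : x ∈ Ω <;>
    by_cases hyE : y ∈ E <;> by_cases hyF : y ∈ F <;> by_cases hyO : y ∈ Ω <;>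
    simp [Set.indicator_apply, Set.mem_prod, hxE, hxF, hxO, hyE, hyF, hyO]

variable [MeasurableSpace α] {μ : Measure α} [SFinite μ]

lemma frac_expand {A B : Set α} (hA : MeasurableSet A) (hB : MeasurableSet B)
    (f : α × α → ℝ≥0∞) :
    (∫⁻ x in A, ∫⁻ y in B, f (x, y) ∂μ ∂μ)
      = ∫⁻ x, ∫⁻ y, (A ×ˢ B).indicator f (x, y) ∂μ ∂μ := by
  rw [← lintegral_indicator hA]
  refine lintegral_congr fun x => ?_
  by_cases hx : x ∈ A
  · rw [Set.indicator_of_mem hx, ← lintegral_indicator hB]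
    refine lintegral_congr fun y => ?_
    by_cases hy : y ∈ B
    · rw [Set.indicator_of_mem hy, Set.indicator_of_mem (Set.mk_mem_prod hx hy)]
    · rw [Set.indicator_of_notMem hy,
        Set.indicator_of_notMem (by simp [Set.mem_prod, hy])]
  · rw [Set.indicator_of_notMem hx]
    symm
    calc (∫⁻ y, (A ×ˢ B).indicator f (x, y) ∂μ) = ∫⁻ _, (0:ℝ≥0∞) ∂μ :=
          lintegral_congr fun y => Set.indicator_of_notMem (fun h => hx h.1) f
      _ = 0 := lintegral_zero

lemma frac_dadd {f g : α × α → ℝ≥0∞} (hf : Measurable f) (hg : Measurable g) :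
    (∫⁻ x, ∫⁻ y, f (x, y) ∂μ ∂μ) + (∫⁻ x, ∫⁻ y, g (x, y) ∂μ ∂μ)
      = ∫⁻ x, ∫⁻ y, (f (x, y) + g (x, y)) ∂μ ∂μ := by
  rw [← lintegral_add_left (hf.lintegral_prod_right')]
  refine lintegral_congr fun x => ?_
  exact (lintegral_add_left (hf.comp measurable_prodMk_left) _).symm

end Aux

theorem stmt_17 (n : ℕ) (hn : 1 ≤ n) (s : ℝ) (hs : s ∈ Set.Ioo (0:ℝ) (1/2))
    (Ω : Set (EuclideanSpace ℝ (Fin n))) (hΩ : IsOpen Ω)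
    (E F : Set (EuclideanSpace ℝ (Fin n)))
    (hE : MeasurableSet E) (hF : MeasurableSet F)
    (hEfin : fracPer n s E Ω < ⊤) (hFfin : fracPer n s F Ω < ⊤) :
    fracPer n s (E ∩ F) Ω + fracPer n s (E ∪ F) Ω ≤
      fracPer n s E Ω + fracPer n s F Ω := by
  set K : EuclideanSpace ℝ (Fin n) × EuclideanSpace ℝ (Fin n) → ℝ≥0∞ :=
    fun p => ENNReal.ofReal (‖p.1 - p.2‖ ^ (-((n : ℝ) + 2 * s))) with hKdef
  have hK : Measurable K :=
    ((measurable_fst.sub measurable_snd).norm.pow_const _).ennreal_ofReal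
  have hΩm : MeasurableSet Ω := hΩ.measurableSet
  -- rewrite fracPer as a double integral of indicator functions
  have hfp : ∀ (G : Set (EuclideanSpace ℝ (Fin n))), MeasurableSet G →
      fracPer n s G Ω = ∫⁻ x, ∫⁻ y,
        (((G ∩ Ω) ×ˢ Gᶜ).indicator K (x, y)
          + ((Ω \ G) ×ˢ (G \ Ω)).indicator K (x, y)) := by
    intro G hG
    rw [fracPer, fracInter, fracInter,
      frac_expand (hG.inter hΩm) hG.compl K,
      frac_expand (hΩm.diff hG) (hG.diff hΩm) K,
      frac_dadd (hK.indicator ((hG.inter hΩm).prod hG.compl))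
        (hK.indicator ((hΩm.diff hG).prod (hG.diff hΩm)))]
  have m1 : ∀ (A B : Set (EuclideanSpace ℝ (Fin n))), MeasurableSet A → MeasurableSet B →
      Measurable fun p : EuclideanSpace ℝ (Fin n) × EuclideanSpace ℝ (Fin n) => (A ×ˢ B).indicator K p := fun A B hA hB =>
    hK.indicator (hA.prod hB)
  rw [hfp _ (hE.inter hF), hfp _ (hE.union hF), hfp _ hE, hfp _ hF,
    frac_dadd
      (((m1 _ _ (((hE.inter hF)).inter hΩm) (hE.inter hF).compl)).fun_add
        (m1 _ _ (hΩm.diff (hE.inter hF)) ((hE.inter hF).diff hΩm)))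
      (((m1 _ _ (((hE.union hF)).inter hΩm) (hE.union hF).compl)).fun_add
        (m1 _ _ (hΩm.diff (hE.union hF)) ((hE.union hF).diff hΩm))),
    frac_dadd
      (((m1 _ _ (hE.inter hΩm) hE.compl)).fun_add
        (m1 _ _ (hΩm.diff hE) (hE.diff hΩm)))
      (((m1 _ _ (hF.inter hΩm) hF.compl)).fun_add
        (m1 _ _ (hΩm.diff hF) (hF.diff hΩm)))]
  refine lintegral_mono fun x => lintegral_mono fun y => ?_
  exact frac_key_pointwise E F Ω K (x, y)
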